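/- arXiv:1401.0230 — 4 statements merged into one kernel-verified Lean document; each statement's English description precedes it below -/
import Mathlib

section
/- (Virial theorem for dissipative Lagrangian systems) Let ζ ∈ ℂ and q ∈ ℂ^N with q ≠ 0 and C(ζ,β)q = 0, so that Q(t) = e^{−iζt}q (with Q̇(t) = −iζe^{−iζt}q) is an eigenmode of the Lagrangian system αQ̈ + (2θ+βR)Q̇ + ηQ = 0. If Re ζ ≠ 0, then for every t ∈ ℝ one has 𝒯(Q̇(t),Q(t)) = 𝒱(Q̇(t),Q(t)) − (Im ζ / Re ζ)² · Re⟨Q̇(t), θQ(t)⟩. If instead Re ζ = 0, then either ζ = 0 or ⟨Q̇(t), θQ(t)⟩ = 0 for every t ∈ ℝ. -/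
open Matrix
open scoped ComplexOrder

noncomputable section

variable {N : ℕ}

/-- A real matrix viewed as a complex matrix. -/
def cm (M : Matrix (Fin N) (Fin N) ℝ) : Matrix (Fin N) (Fin N) ℂ :=
  M.map Complex.ofReal

/-- The quadratic matrix pencil `C(ζ,β) = ζ²α + iζ(2θ + βR) − η`. -/
def pencil (α η θ R : Matrix (Fin N) (Fin N) ℝ) (β : ℝ) (ζ : ℂ) :
    Matrix (Fin N) (Fin N) ℂ :=
  ζ ^ 2 • cm α + (Complex.I * ζ) • ((2 : ℂ) • cm θ + (β : ℂ) • cm R) - cm η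

/-- The eigenmode trajectory `Q(t) = e^{−iζt} q`. -/
def trajQ (ζ : ℂ) (q : Fin N → ℂ) (t : ℝ) : Fin N → ℂ :=
  Complex.exp (-Complex.I * ζ * t) • q

/-- The eigenmode velocity `Q̇(t) = −iζ e^{−iζt} q`. -/
def trajQdot (ζ : ℂ) (q : Fin N → ℂ) (t : ℝ) : Fin N → ℂ :=
  (-Complex.I * ζ * Complex.exp (-Complex.I * ζ * t)) • q

/-- Kinetic energy `𝒯(Q̇,Q) = ½⟨Q̇, αQ̇⟩ + ½ Re⟨Q̇, θQ⟩`. -/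
def kinE (α θ : Matrix (Fin N) (Fin N) ℝ) (Qd Q : Fin N → ℂ) : ℝ :=
  (1 / 2) * (star Qd ⬝ᵥ (cm α *ᵥ Qd)).re + (1 / 2) * (star Qd ⬝ᵥ (cm θ *ᵥ Q)).re

/-- Potential energy `𝒱(Q̇,Q) = ½⟨Q, ηQ⟩ − ½ Re⟨Q̇, θQ⟩`. -/
def potE (η θ : Matrix (Fin N) (Fin N) ℝ) (Qd Q : Fin N → ℂ) : ℝ :=
  (1 / 2) * (star Q ⬝ᵥ (cm η *ᵥ Q)).re - (1 / 2) * (star Qd ⬝ᵥ (cm θ *ᵥ Q)).re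

lemma cm_conjTranspose {N : ℕ} (M : Matrix (Fin N) (Fin N) ℝ) : (cm M)ᴴ = cm Mᵀ := by
  ext i j; simp [cm, conjTranspose_apply]

lemma star_quad {N : ℕ} (A : Matrix (Fin N) (Fin N) ℂ) (q : Fin N → ℂ) :
    star (star q ⬝ᵥ A *ᵥ q) = star q ⬝ᵥ Aᴴ *ᵥ q := by
  rw [star_dotProduct, star_star, star_mulVec, ← Matrix.dotProduct_mulVec]

lemma smul_quad {N : ℕ} (A : Matrix (Fin N) (Fin N) ℂ) (q : Fin N → ℂ) (c d : ℂ) :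
    star (c • q) ⬝ᵥ A *ᵥ (d • q) = star c * d * (star q ⬝ᵥ A *ᵥ q) := by
  simp only [star_smul, Matrix.mulVec_smul, smul_dotProduct, dotProduct_smul,
    smul_eq_mul]
  ring

/-- **Virial theorem for dissipative Lagrangian systems.**
If `Q(t) = e^{−iζt} q` is an eigenmode of `αQ̈ + (2θ+βR)Q̇ + ηQ = 0` then:
if `Re ζ ≠ 0`, for all `t`, `𝒯 = 𝒱 − (Im ζ / Re ζ)² Re⟨Q̇, θQ⟩`; and if `Re ζ = 0`,
either `ζ = 0` or `⟨Q̇(t), θQ(t)⟩ = 0` for all `t`. -/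
theorem virial_theorem_dissipative
    {N : ℕ} (hN : 1 ≤ N)
    (α η θ R : Matrix (Fin N) (Fin N) ℝ)
    (hα : (cm α).PosDef) (hη : (cm η).PosSemidef)
    (hθ : θᵀ = -θ) (hR : (cm R).PosSemidef)
    (β : ℝ) (hβ : 0 ≤ β)
    (ζ : ℂ) (q : Fin N → ℂ) (hq : q ≠ 0)
    (hmode : pencil α η θ R β ζ *ᵥ q = 0) :
    (ζ.re ≠ 0 →
      ∀ t : ℝ,
        kinE α θ (trajQdot ζ q t) (trajQ ζ q t) =
          potE η θ (trajQdot ζ q t) (trajQ ζ q t) -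
            (ζ.im / ζ.re) ^ 2 * (star (trajQdot ζ q t) ⬝ᵥ (cm θ *ᵥ trajQ ζ q t)).re) ∧
    (ζ.re = 0 →
      ζ = 0 ∨ ∀ t : ℝ, star (trajQdot ζ q t) ⬝ᵥ (cm θ *ᵥ trajQ ζ q t) = 0) := by
  set a := star q ⬝ᵥ cm α *ᵥ q with ha_def
  set s := star q ⬝ᵥ cm θ *ᵥ q with hs_def
  set h := star q ⬝ᵥ cm η *ᵥ q with hh_def
  set r := star q ⬝ᵥ cm R *ᵥ q with hr_def
  have haim : a.im = 0 := by
    have h1 := star_quad (cm α) q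
    rw [hα.1.eq, ← ha_def] at h1
    exact Complex.conj_eq_iff_im.mp h1
  have hhim : h.im = 0 := by
    have h1 := star_quad (cm η) q
    rw [hη.1.eq, ← hh_def] at h1
    exact Complex.conj_eq_iff_im.mp h1
  have hrim : r.im = 0 := by
    have h1 := star_quad (cm R) q
    rw [hR.1.eq, ← hr_def] at h1
    exact Complex.conj_eq_iff_im.mp h1
  have hsre : s.re = 0 := by
    have h1 := star_quad (cm θ) q
    rw [cm_conjTranspose, hθ] at h1
    have h2 : cm (-θ) = -cm θ := by ext i j; simp [cm]
    rw [h2, Matrix.neg_mulVec, dotProduct_neg, ← hs_def] at h1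
    have := congrArg Complex.re h1
    simp only [Complex.star_def, Complex.conj_re, Complex.neg_re] at this
    linarith
  have hP : ζ^2 * a + (Complex.I * ζ) * (2 * s + (β:ℂ) * r) - h = 0 := by
    have h1 := congrArg (fun v => star q ⬝ᵥ v) hmode
    simp only [pencil, Matrix.add_mulVec, Matrix.sub_mulVec, Matrix.smul_mulVec,
      dotProduct_add, dotProduct_sub, dotProduct_smul, smul_eq_mul, dotProduct_zero,
      ← ha_def, ← hs_def, ← hh_def, ← hr_def] at h1
    linear_combination h1
  have hre := congrArg Complex.re hP
  have him := congrArg Complex.im hP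
  simp only [pow_two, Complex.add_re, Complex.sub_re, Complex.mul_re, Complex.mul_im,
    Complex.add_im, Complex.sub_im, Complex.I_re, Complex.I_im, Complex.ofReal_re,
    Complex.ofReal_im, Complex.zero_re, Complex.zero_im, Complex.re_ofNat, Complex.im_ofNat, haim, hhim, hrim, hsre] at hre him
  constructor
  · intro hx t
    simp only [kinE, potE, trajQ, trajQdot, smul_quad, ← ha_def, ← hs_def, ← hh_def]
    set e := Complex.exp (-Complex.I * ζ * t) with he_def
    simp only [Complex.mul_re, Complex.mul_im, Complex.I_re, Complex.I_im, Complex.neg_re,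
      Complex.neg_im, RCLike.star_def, Complex.conj_re, Complex.conj_im, haim, hsre, hhim]
    field_simp
    linear_combination (ζ.re^2*(e.re^2+e.im^2))*hre + (ζ.re*ζ.im*(e.re^2+e.im^2))*him
  · intro hx
    simp only [hx] at him
    have hys : ζ.im * s.im = 0 := by linarith [him]
    rcases mul_eq_zero.mp hys with hy | hs0
    · left
      exact Complex.ext hx hy
    · right
      intro t
      have hs' : s = 0 := Complex.ext hsre hs0
      simp only [trajQ, trajQdot, smul_quad, ← hs_def, hs', mul_zero]
end
end

section
/- (Equipartition of energy for oscillatory eigenmodes) Assume θ = 0. Let ζ ∈ ℂ and q ∈ ℂ^N with q ≠ 0, C(ζ,β)q = 0, and Re ζ ≠ 0, so that Q(t) = e^{−iζt}q is an oscillatory eigenmode of αQ̈ + βRQ̇ + ηQ = 0. Then for every t ∈ ℝ the kinetic energy equals the potential energy: ½⟨Q̇(t), αQ̇(t)⟩ = ½⟨Q(t), ηQ(t)⟩, i.e. 𝒯(Q̇(t),Q(t)) = 𝒱(Q̇(t),Q(t)). -/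
open Matrix
open scoped ComplexOrder

noncomputable section

variable {N : ℕ}

lemma key_equipartition_scalar (ζ a r e : ℂ) (hx : ζ.re ≠ 0) (ha : a.im = 0) (hr : r.im = 0)
    (he : e.im = 0) (h : ζ ^ 2 * a + Complex.I * ζ * r - e = 0) :
    (starRingEnd ℂ) ζ * ζ * a = e := by
  rw [Complex.ext_iff] at h
  simp [Complex.mul_re, Complex.mul_im, pow_two, ha, hr, he] at h
  obtain ⟨h1, h2⟩ := h
  have h3 : 2 * ζ.im * a.re + r.re = 0 := by
    rcases mul_eq_zero.mp (show ζ.re * (2 * ζ.im * a.re + r.re) = 0 by linear_combination h2)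
      with h | h
    · exact absurd h hx
    · exact h
  apply Complex.ext <;> simp [Complex.mul_re, Complex.mul_im, ha, he]
  · linear_combination h1 + ζ.im * h3
  · left; ring

/-- **Equipartition of energy for oscillatory eigenmodes** (case `θ = 0`).
If `Q(t) = e^{−iζt} q` is an eigenmode of `αQ̈ + βRQ̇ + ηQ = 0` with `Re ζ ≠ 0`, then
for every `t`, the kinetic energy `½⟨Q̇, αQ̇⟩` equals the potential energy `½⟨Q, ηQ⟩`. -/
theorem energy_equipartition
    {N : ℕ} (hN : 1 ≤ N)
    (α η R : Matrix (Fin N) (Fin N) ℝ)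
    (hα : (cm α).PosDef) (hη : (cm η).PosSemidef) (hR : (cm R).PosSemidef)
    (β : ℝ) (hβ : 0 ≤ β)
    (ζ : ℂ) (hζ : ζ.re ≠ 0) (q : Fin N → ℂ) (hq : q ≠ 0)
    (hmode : pencil α η 0 R β ζ *ᵥ q = 0) :
    ∀ t : ℝ,
      (1 / 2 : ℂ) * (star (trajQdot ζ q t) ⬝ᵥ (cm α *ᵥ trajQdot ζ q t)) =
        (1 / 2 : ℂ) * (star (trajQ ζ q t) ⬝ᵥ (cm η *ᵥ trajQ ζ q t)) := by
  intro t
  have hEq : ζ ^ 2 * (star q ⬝ᵥ (cm α *ᵥ q))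
      + Complex.I * ζ * ((β : ℂ) * (star q ⬝ᵥ (cm R *ᵥ q)))
      - (star q ⬝ᵥ (cm η *ᵥ q)) = 0 := by
    have h := congrArg (fun v => star q ⬝ᵥ v) hmode
    simp only [pencil, cm, Matrix.map_zero Complex.ofReal Complex.ofReal_zero, smul_zero,
      zero_add, add_mulVec, sub_mulVec, smul_mulVec, dotProduct_add, dotProduct_sub,
      dotProduct_smul, smul_eq_mul, dotProduct_zero] at h
    simp only [cm]
    linear_combination h
  have ha : 0 < star q ⬝ᵥ (cm α *ᵥ q) := hα.dotProduct_mulVec_pos hq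
  have hrr : 0 ≤ star q ⬝ᵥ (cm R *ᵥ q) := hR.dotProduct_mulVec_nonneg q
  have hee : 0 ≤ star q ⬝ᵥ (cm η *ᵥ q) := hη.dotProduct_mulVec_nonneg q
  have haim : (star q ⬝ᵥ (cm α *ᵥ q)).im = 0 := ((Complex.lt_def.mp ha).2).symm
  have hrim : (star q ⬝ᵥ (cm R *ᵥ q)).im = 0 := ((Complex.le_def.mp hrr).2).symm
  have heim : (star q ⬝ᵥ (cm η *ᵥ q)).im = 0 := ((Complex.le_def.mp hee).2).symm
  have hk := key_equipartition_scalar ζ (star q ⬝ᵥ (cm α *ᵥ q))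
    ((β : ℂ) * (star q ⬝ᵥ (cm R *ᵥ q))) (star q ⬝ᵥ (cm η *ᵥ q)) hζ haim
    (by simp [Complex.mul_im, hrim]) heim hEq
  simp only [trajQ, trajQdot, star_smul, smul_dotProduct, mulVec_smul, dotProduct_smul,
    smul_eq_mul, Complex.star_def, _root_.map_mul, Complex.conj_I, _root_.map_neg]
  set E := Complex.exp (-Complex.I * ζ * t)
  linear_combination ((1:ℂ)/2) * (starRingEnd ℂ E * E) * hk +
    (-1/2 * ζ * E * starRingEnd ℂ ζ * starRingEnd ℂ E * (star q ⬝ᵥ cm α *ᵥ q)) * Complex.I_sq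
end
end

section
/- (Real eigenfrequencies of the nondissipative system) Suppose β = 0, i.e. consider the pencil C(ζ,0) = ζ²α + 2iζθ − η. Then every ζ ∈ ℂ with det(ζ²α + 2iζθ − η) = 0 is real: Im ζ = 0. -/
open Matrix
open scoped ComplexOrder

noncomputable section

variable {N : ℕ}

/-- **Real eigenfrequencies of the nondissipative system.** For `β = 0`, every root `ζ` of
`det(ζ²α + 2iζθ − η) = 0` is real. -/
theorem real_eigenfrequencies_nondissipative
    {N : ℕ} (hN : 1 ≤ N)
    (α η θ : Matrix (Fin N) (Fin N) ℝ)
    (hα : (cm α).PosDef) (hη : (cm η).PosSemidef) (hθ : θᵀ = -θ)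
    (ζ : ℂ) (hdet : (ζ ^ 2 • cm α + (2 * Complex.I * ζ) • cm θ - cm η).det = 0) :
    ζ.im = 0 := by
  obtain ⟨v, hv, hMv⟩ := (Matrix.exists_mulVec_eq_zero_iff).2 hdet
  set a := star v ⬝ᵥ (cm α *ᵥ v) with ha
  set b := star v ⬝ᵥ (cm θ *ᵥ v) with hb
  set c := star v ⬝ᵥ (cm η *ᵥ v) with hc
  have hapos : 0 < a := hα.dotProduct_mulVec_pos hv
  have hcnn : 0 ≤ c := hη.dotProduct_mulVec_nonneg v
  -- b is purely imaginary
  have hTH : (cm θ)ᴴ = -(cm θ) := by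
    ext i j
    simp only [cm, conjTranspose_apply, map_apply, Matrix.neg_apply]
    rw [show θ j i = θᵀ i j from rfl, hθ]
    simp
  have hbstar : star b = -b := by
    rw [hb, ← star_dotProduct, star_mulVec, ← dotProduct_mulVec, hTH, neg_mulVec,
      dotProduct_neg]
  -- the scalar equation
  have heq : ζ ^ 2 * a + (2 * Complex.I * ζ) * b - c = 0 := by
    have := congrArg (fun w => star v ⬝ᵥ w) hMv
    simpa [sub_mulVec, add_mulVec, smul_mulVec, dotProduct_smul, dotProduct_sub,
      dotProduct_add, smul_eq_mul, ha, hb, hc] using this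
  -- extract real data
  have haim : a.im = 0 := by
    have := hapos
    rw [Complex.lt_def] at this
    exact this.2.symm
  have hare : 0 < a.re := by
    have := hapos; rw [Complex.lt_def] at this; simpa using this.1
  have hcim : c.im = 0 := by
    have := hcnn; rw [Complex.le_def] at this; exact this.2.symm
  have hcre : 0 ≤ c.re := by
    have := hcnn; rw [Complex.le_def] at this; simpa using this.1
  have hbre : b.re = 0 := by
    have := congrArg Complex.re hbstar
    simp [Complex.conj_re] at this  -- star b re = b.re
    linarith
  -- component form
  set x := ζ.re; set y := ζ.im
  have h1 := congrArg Complex.re heq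
  have h2 := congrArg Complex.im heq
  simp [Complex.add_re, Complex.sub_re, Complex.mul_re, Complex.mul_im, Complex.add_im,
    Complex.sub_im, Complex.I_re, Complex.I_im, pow_two, haim, hcim, hbre] at h1 h2
  by_contra hy
  have h3 : ζ.im * (ζ.re * a.re - b.im) = 0 := by linear_combination h2 / 2
  have h4 : ζ.re * a.re = b.im := by
    rcases mul_eq_zero.1 h3 with h | h
    · exact absurd h hy
    · linarith
  have h6 : 2 * ζ.re * (ζ.re * a.re) = 2 * ζ.re * b.im := by rw [h4]
  nlinarith [h6, mul_pos hare (mul_self_pos.2 hy), mul_nonneg (mul_self_nonneg ζ.re) hare.le]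
end
end

section
/- (Factorization of the characteristic matrix) For every ζ ∈ ℂ with ζ ≠ 0, the 2N×2N matrix ζ·1 − A(β) admits the block factorization ζ·1 − A(β) = [[K_p, ζ⁻¹iΦᵀ],[0, 1]] · [[ζ⁻¹·1, 0],[0, ζ·1]] · [[C(ζ,β), 0],[0, 1]] · [[K_p, 0],[−ζ⁻¹iΦ, 1]], where each factor is a 2N×2N matrix written in N×N blocks and 1 denotes the N×N identity matrix. -/
open Matrix
open scoped ComplexOrder

noncomputable section

variable {N : ℕ}

/-- `K_p = (√α)⁻¹`. -/
def Kp {α : Matrix (Fin N) (Fin N) ℝ} (hα : (cm α).PosDef) : Matrix (Fin N) (Fin N) ℂ :=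
  ((hα.posSemidef.1.eigenvectorUnitary : Matrix (Fin N) (Fin N) ℂ) *
    diagonal ((↑) ∘ (√·) ∘ hα.posSemidef.1.eigenvalues) *
    (star hα.posSemidef.1.eigenvectorUnitary : Matrix (Fin N) (Fin N) ℂ))⁻¹

/-- `Φ = √η · K_p`. -/
def Phi {α η : Matrix (Fin N) (Fin N) ℝ} (hα : (cm α).PosDef) (hη : (cm η).PosSemidef) :
    Matrix (Fin N) (Fin N) ℂ :=
  ((hη.1.eigenvectorUnitary : Matrix (Fin N) (Fin N) ℂ) *
    diagonal ((↑) ∘ (√·) ∘ hη.1.eigenvalues) *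
    (star hη.1.eigenvectorUnitary : Matrix (Fin N) (Fin N) ℂ)) * Kp hα

/-- `R̃ = K_p R K_p`. -/
def Rt (R : Matrix (Fin N) (Fin N) ℝ) {α : Matrix (Fin N) (Fin N) ℝ} (hα : (cm α).PosDef) :
    Matrix (Fin N) (Fin N) ℂ :=
  Kp hα * cm R * Kp hα

/-- `Ω_p = −2i K_p θ K_p`. -/
def Omp (θ : Matrix (Fin N) (Fin N) ℝ) {α : Matrix (Fin N) (Fin N) ℝ} (hα : (cm α).PosDef) :
    Matrix (Fin N) (Fin N) ℂ :=
  ((-2 : ℂ) * Complex.I) • (Kp hα * cm θ * Kp hα)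

/-- `Ω = [[Ω_p, −iΦᵀ],[iΦ, 0]]`. -/
def Om (θ : Matrix (Fin N) (Fin N) ℝ) {α η : Matrix (Fin N) (Fin N) ℝ}
    (hα : (cm α).PosDef) (hη : (cm η).PosSemidef) :
    Matrix (Fin N ⊕ Fin N) (Fin N ⊕ Fin N) ℂ :=
  fromBlocks (Omp θ hα) ((-Complex.I) • (Phi hα hη)ᵀ) (Complex.I • Phi hα hη) 0

/-- `B = [[R̃, 0],[0, 0]]`. -/
def Bm (R : Matrix (Fin N) (Fin N) ℝ) {α : Matrix (Fin N) (Fin N) ℝ} (hα : (cm α).PosDef) :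
    Matrix (Fin N ⊕ Fin N) (Fin N ⊕ Fin N) ℂ :=
  fromBlocks (Rt R hα) 0 0 0

/-- The system operator `A(β) = Ω − iβB`. -/
def Asys (θ R : Matrix (Fin N) (Fin N) ℝ) {α η : Matrix (Fin N) (Fin N) ℝ}
    (hα : (cm α).PosDef) (hη : (cm η).PosSemidef) (β : ℝ) :
    Matrix (Fin N ⊕ Fin N) (Fin N ⊕ Fin N) ℂ :=
  Om θ hα hη - (Complex.I * (β : ℂ)) • Bm R hα

/-- The ℓ²→ℓ² operator norm of a complex matrix. -/
def opN {n : Type*} [Fintype n] [DecidableEq n] (M : Matrix n n ℂ) : ℝ :=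
  ‖Matrix.toEuclideanCLM (𝕜 := ℂ) M‖

/-- `ω_max = ‖Ω‖`. -/
def omegaMax (θ : Matrix (Fin N) (Fin N) ℝ) {α η : Matrix (Fin N) (Fin N) ℝ}
    (hα : (cm α).PosDef) (hη : (cm η).PosSemidef) : ℝ :=
  opN (Om θ hα hη)

/-- `b_min`, the smallest nonzero eigenvalue of `B`. -/
def bMin (R : Matrix (Fin N) (Fin N) ℝ) {α : Matrix (Fin N) (Fin N) ℝ} (hα : (cm α).PosDef) : ℝ :=
  sInf {r : ℝ | r ≠ 0 ∧ (r : ℂ) ∈ spectrum ℂ (Bm R hα)}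

section Aux

open scoped MatrixOrder

/-- Square root of a positive semidefinite complex matrix via the spectral theorem. -/
def Matrix.PosSemidef.sqrt {N : ℕ} {A : Matrix (Fin N) (Fin N) ℂ} (hA : A.PosSemidef) :
    Matrix (Fin N) (Fin N) ℂ :=
  (hA.1.eigenvectorUnitary : Matrix (Fin N) (Fin N) ℂ) *
    diagonal ((↑) ∘ (√·) ∘ hA.1.eigenvalues) *
    (star hA.1.eigenvectorUnitary : Matrix (Fin N) (Fin N) ℂ)

lemma Matrix.PosSemidef.sqrt_eq_cfc {N : ℕ} {A : Matrix (Fin N) (Fin N) ℂ} (hA : A.PosSemidef) :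
    hA.sqrt = CFC.sqrt A := by
  rw [CFC.sqrt_eq_real_sqrt A hA.nonneg, cfcₙ_eq_cfc, hA.1.cfc_eq]
  simp only [IsHermitian.cfc, Matrix.PosSemidef.sqrt]
  rfl

lemma Matrix.PosSemidef.sqrt_mul_self {N : ℕ} {A : Matrix (Fin N) (Fin N) ℂ}
    (hA : A.PosSemidef) : hA.sqrt * hA.sqrt = A := by
  rw [hA.sqrt_eq_cfc]; exact CFC.sqrt_mul_sqrt_self A hA.nonneg

lemma Matrix.PosSemidef.posSemidef_sqrt {N : ℕ} {A : Matrix (Fin N) (Fin N) ℂ}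
    (hA : A.PosSemidef) : hA.sqrt.PosSemidef := by
  rw [hA.sqrt_eq_cfc]; exact (CFC.sqrt_nonneg A).posSemidef

lemma Matrix.PosSemidef.eq_sqrt_of_sq_eq {N : ℕ} {A B : Matrix (Fin N) (Fin N) ℂ}
    (hB : B.PosSemidef) (hA : A.PosSemidef) (h : B ^ 2 = A) : B = hA.sqrt := by
  rw [hA.sqrt_eq_cfc, eq_comm, CFC.sqrt_eq_iff A B hA.nonneg hB.nonneg, ← sq, h]


lemma cm_transpose_of_herm {N : ℕ} {M : Matrix (Fin N) (Fin N) ℝ}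
    (h : (cm M).IsHermitian) : (cm M)ᵀ = cm M := by
  ext i j
  have := congrFun (congrFun h i) j
  simpa [cm, Matrix.conjTranspose_apply, Matrix.transpose_apply, Matrix.map_apply] using this

lemma sqrt_transpose_cm {N : ℕ} {M : Matrix (Fin N) (Fin N) ℝ}
    (hM : (cm M).PosSemidef) : hM.sqrtᵀ = hM.sqrt := by
  have h1 : hM.sqrtᵀ ^ 2 = cm M := by
    rw [pow_two, ← Matrix.transpose_mul, hM.sqrt_mul_self,
      cm_transpose_of_herm hM.isHermitian]
  exact hM.posSemidef_sqrt.transpose.eq_sqrt_of_sq_eq hM h1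

lemma sqrt_det_isUnit {N : ℕ} {α : Matrix (Fin N) (Fin N) ℝ}
    (hα : (cm α).PosDef) : IsUnit hα.posSemidef.sqrt.det := by
  have h := hα.posSemidef.sqrt_mul_self
  have hd : hα.posSemidef.sqrt.det * hα.posSemidef.sqrt.det = (cm α).det := by
    rw [← Matrix.det_mul, h]
  have hne : (cm α).det ≠ 0 := hα.det_pos.ne'
  exact isUnit_iff_ne_zero.2 fun h0 => hne (by rw [← hd, h0, mul_zero])

end Aux

/-- **Factorization of the characteristic matrix.** For `ζ ≠ 0`,
`ζ·1 − A(β) = [[K_p, ζ⁻¹iΦᵀ],[0,1]] · [[ζ⁻¹·1,0],[0,ζ·1]] · [[C(ζ,β),0],[0,1]] · [[K_p,0],[−ζ⁻¹iΦ,1]]`. -/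
theorem characteristic_matrix_factorization
    {N : ℕ} (hN : 1 ≤ N)
    (α η θ R : Matrix (Fin N) (Fin N) ℝ)
    (hα : (cm α).PosDef) (hη : (cm η).PosSemidef)
    (hθ : θᵀ = -θ) (hR : (cm R).PosSemidef)
    (β : ℝ) (hβ : 0 ≤ β)
    (ζ : ℂ) (hζ : ζ ≠ 0) :
    ζ • (1 : Matrix (Fin N ⊕ Fin N) (Fin N ⊕ Fin N) ℂ) - Asys θ R hα hη β =
      fromBlocks (Kp hα) ((ζ⁻¹ * Complex.I) • (Phi hα hη)ᵀ) 0 1 *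
        fromBlocks (ζ⁻¹ • 1) 0 0 (ζ • 1) *
        fromBlocks (pencil α η θ R β ζ) 0 0 1 *
        fromBlocks (Kp hα) 0 (-(ζ⁻¹ * Complex.I) • Phi hα hη) 1 := by
  have hdet := sqrt_det_isUnit hα
  set S := hα.posSemidef.sqrt with hSdef
  have hSt : Sᵀ = S := sqrt_transpose_cm hα.posSemidef
  have hKS : Kp hα * S = 1 := Matrix.nonsing_inv_mul S hdet
  have hSK : S * Kp hα = 1 := Matrix.mul_nonsing_inv S hdet
  have hKt : (Kp hα)ᵀ = Kp hα := by
    rw [show Kp hα = S⁻¹ from rfl, Matrix.transpose_nonsing_inv, hSt]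
  have hPhiT : (Phi hα hη)ᵀ = Kp hα * hη.sqrt := by
    rw [show Phi hα hη = hη.sqrt * Kp hα from rfl, Matrix.transpose_mul, hKt, sqrt_transpose_cm hη]
  have hKAK : Kp hα * cm α * Kp hα = 1 := by
    have hc : cm α = S * S := hα.posSemidef.sqrt_mul_self.symm
    rw [hc, show Kp hα * (S * S) * Kp hα = (Kp hα * S) * (S * Kp hα) by noncomm_ring,
      hKS, hSK, Matrix.one_mul]
  have hPP : (Phi hα hη)ᵀ * Phi hα hη = Kp hα * cm η * Kp hα := by
    rw [hPhiT, show Phi hα hη = hη.sqrt * Kp hα from rfl, show Kp hα * hη.sqrt * (hη.sqrt * Kp hα)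
        = Kp hα * (hη.sqrt * hη.sqrt) * Kp hα by noncomm_ring, hη.sqrt_mul_self]
  -- expand the left-hand side into blocks
  have hLHS : ζ • (1 : Matrix (Fin N ⊕ Fin N) (Fin N ⊕ Fin N) ℂ) - Asys θ R hα hη β =
      fromBlocks (ζ • 1 - Omp θ hα + (Complex.I * (β : ℂ)) • Rt R hα)
        (Complex.I • (Phi hα hη)ᵀ) ((-Complex.I) • Phi hα hη) (ζ • 1) := by
    rw [Asys, Om, Bm, ← Matrix.fromBlocks_one (l := Fin N) (m := Fin N),
      Matrix.fromBlocks_smul, Matrix.fromBlocks_smul]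
    ext (i | i) (j | j) <;>
      simp [Matrix.fromBlocks, Matrix.sub_apply, Matrix.add_apply, Matrix.smul_apply,
        Matrix.neg_apply, sub_eq_add_neg] <;> ring
  rw [hLHS]
  -- expand the right-hand side block products
  rw [Matrix.fromBlocks_multiply, Matrix.fromBlocks_multiply, Matrix.fromBlocks_multiply]
  rw [Matrix.fromBlocks_inj]
  refine ⟨?_, ?_, ?_, ?_⟩
  · -- top-left block
    simp only [Matrix.mul_smul, Matrix.smul_mul, Matrix.mul_one, Matrix.one_mul,
      Matrix.mul_zero, Matrix.zero_mul, smul_zero, zero_add,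
      add_zero, add_zero, zero_add, smul_smul, smul_smul]
    have hKAK' : Kp hα * (cm α * Kp hα) = 1 := by rw [← Matrix.mul_assoc]; exact hKAK
    have hexp : Kp hα * pencil α η θ R β ζ * Kp hα =
        ζ ^ 2 • (1 : Matrix (Fin N) (Fin N) ℂ)
          + (Complex.I * ζ) • ((2 : ℂ) • (Kp hα * cm θ * Kp hα)
            + (β : ℂ) • (Kp hα * cm R * Kp hα))
          - Kp hα * cm η * Kp hα := by
      rw [pencil]
      simp only [Matrix.mul_sub, Matrix.sub_mul, Matrix.mul_add, Matrix.add_mul,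
        Matrix.mul_smul, Matrix.smul_mul, smul_add, smul_smul, Matrix.mul_assoc, hKAK']
    rw [hexp, Omp, Rt, hPP]
    match_scalars <;> field_simp <;> ring_nf <;> simp [Complex.I_sq]
  · -- top-right block
    simp only [Matrix.mul_smul, Matrix.smul_mul, Matrix.mul_one, Matrix.one_mul,
      Matrix.mul_zero, Matrix.zero_mul, smul_zero, zero_add,
      add_zero, add_zero, zero_add, smul_smul]
    all_goals match_scalars <;> field_simp
  · -- bottom-left block
    simp only [Matrix.mul_smul, Matrix.smul_mul, Matrix.mul_one, Matrix.one_mul,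
      Matrix.mul_zero, Matrix.zero_mul, smul_zero, zero_add,
      add_zero, add_zero, zero_add, smul_smul]
    all_goals match_scalars <;> field_simp
  · -- bottom-right block
    simp only [Matrix.mul_smul, Matrix.smul_mul, Matrix.mul_one, Matrix.one_mul,
      Matrix.mul_zero, Matrix.zero_mul, smul_zero, zero_add,
      add_zero, add_zero, zero_add, smul_smul]
    all_goals match_scalars <;> field_simp
end
end
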